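/- Suppose q is a primitive n-th root of unity in k and that n does not divide j + 1 for every j in the support of f (i.e., for every j with c_j ≠ 0). Then in the algebra B_q(f) the elements uⁿ and vⁿ are central. -/

import Mathlib

open FreeAlgebra

/-- The defining relations of the algebra `B_q(f)` for `f = ∑_{j=0}^{d} c_j tʲ`:
generators `0 ↦ u`, `1 ↦ v`, `2 ↦ w` subject to `uv = qvu`, `wu = quw + f(v)`,
`wv = q⁻¹vw + f(u)`. -/
inductive BqfRel (k : Type*) [Field k] (q : k) (d : ℕ) (c : ℕ → k) :
    FreeAlgebra k (Fin 3) → FreeAlgebra k (Fin 3) → Prop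
  | uv : BqfRel k q d c (ι k (0 : Fin 3) * ι k (1 : Fin 3))
      (q • (ι k (1 : Fin 3) * ι k (0 : Fin 3)))
  | wu : BqfRel k q d c (ι k (2 : Fin 3) * ι k (0 : Fin 3))
      (q • (ι k (0 : Fin 3) * ι k (2 : Fin 3)) +
        ∑ j ∈ Finset.range (d + 1), c j • ι k (1 : Fin 3) ^ j)
  | wv : BqfRel k q d c (ι k (2 : Fin 3) * ι k (1 : Fin 3))
      (q⁻¹ • (ι k (1 : Fin 3) * ι k (2 : Fin 3)) +
        ∑ j ∈ Finset.range (d + 1), c j • ι k (0 : Fin 3) ^ j)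

section BqfAux
variable {k : Type*} [Field k] {A : Type*} [Ring A] [Algebra k A]

/-- If `U V = q V U` then `U Vʲ = qʲ Vʲ U`. -/
lemma bqf_u_vpow {q : k} {U V : A} (h : U * V = q • (V * U)) (j : ℕ) :
    U * V ^ j = q ^ j • (V ^ j * U) := by
  induction j with
  | zero => simp
  | succ j ih =>
    rw [pow_succ, ← mul_assoc, ih, smul_mul_assoc, mul_assoc, h, mul_smul_comm,
      smul_smul, pow_succ, ← mul_assoc]

/-- Key commutation formula: if `U V = q V U` and `W U = q U W + ∑ F j • Vʲ` then
`W U^(m+1) = q^(m+1) U^(m+1) W + ∑_j (F j · ∑_{i<m+1} (q^(j+1))^i) Vʲ Uᵐ`. -/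
lemma bqf_w_upow {q : k} {U V W : A} {F : ℕ → k} {d : ℕ}
    (huv : U * V = q • (V * U))
    (hwu : W * U = q • (U * W) + ∑ j ∈ Finset.range (d+1), F j • V ^ j) :
    ∀ m : ℕ, W * U ^ (m+1) = q ^ (m+1) • (U ^ (m+1) * W) +
      ∑ j ∈ Finset.range (d+1),
        (F j * ∑ i ∈ Finset.range (m+1), (q ^ (j+1)) ^ i) • (V ^ j * U ^ m) := by
  intro m
  induction m with
  | zero => simpa using hwu
  | succ m ih =>
    have step1 : W * U ^ (m + 2) = (W * U) * U ^ (m+1) := by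
      rw [pow_succ', ← mul_assoc]
    rw [step1, hwu, add_mul, smul_mul_assoc, mul_assoc, ih, mul_add, smul_add,
      Finset.mul_sum, Finset.smul_sum, Finset.sum_mul]
    simp only [smul_mul_assoc]
    rw [add_assoc, ← Finset.sum_add_distrib]
    congr 1
    · rw [mul_smul_comm, smul_smul, ← mul_assoc, ← pow_succ', ← pow_succ']
    · refine Finset.sum_congr rfl fun j _ => ?_
      rw [mul_smul_comm, smul_smul, ← mul_assoc U (V ^ j), bqf_u_vpow huv, smul_mul_assoc,
        smul_smul, mul_assoc (V ^ j) U, ← pow_succ' U, ← add_smul]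
      congr 1
      rw [show (∑ i ∈ Finset.range (m+1+1), (q ^ (j+1)) ^ i)
        = q ^ (j+1) * ∑ i ∈ Finset.range (m+1), (q ^ (j+1)) ^ i + 1 from geom_sum_succ]
      ring

/-- A geometric sum of a nontrivial root of unity vanishes. -/
lemma bqf_geom_zero {n : ℕ} {x : k} (hx1 : x ≠ 1) (hxn : x ^ n = 1) :
    ∑ i ∈ Finset.range n, x ^ i = 0 := by
  rw [geom_sum_eq hx1 n, hxn, sub_self, zero_div]

end BqfAux

/-- An element commuting with the three generators of `B_q(f)` is central. -/
lemma bqf_mem_center {k : Type*} [Field k] (q : k) (d : ℕ) (c : ℕ → k)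
    (a : RingQuot (BqfRel k q d c))
    (hU : a * RingQuot.mkAlgHom k (BqfRel k q d c) (ι k (0 : Fin 3)) =
      RingQuot.mkAlgHom k (BqfRel k q d c) (ι k (0 : Fin 3)) * a)
    (hV : a * RingQuot.mkAlgHom k (BqfRel k q d c) (ι k (1 : Fin 3)) =
      RingQuot.mkAlgHom k (BqfRel k q d c) (ι k (1 : Fin 3)) * a)
    (hW : a * RingQuot.mkAlgHom k (BqfRel k q d c) (ι k (2 : Fin 3)) =
      RingQuot.mkAlgHom k (BqfRel k q d c) (ι k (2 : Fin 3)) * a) :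
    a ∈ Subalgebra.center k (RingQuot (BqfRel k q d c)) := by
  rw [Subalgebra.mem_center_iff]
  intro b
  obtain ⟨x, rfl⟩ := RingQuot.mkAlgHom_surjective k (BqfRel k q d c) b
  induction x using FreeAlgebra.induction with
  | grade0 r => simp [AlgHom.commutes, Algebra.commutes]
  | grade1 i =>
    fin_cases i
    · exact hU.symm
    · exact hV.symm
    · exact hW.symm
  | mul x y hx hy => rw [map_mul, mul_assoc, hy, ← mul_assoc, hx, mul_assoc]
  | add x y hx hy => rw [map_add, add_mul, mul_add, hx, hy]

/-- (char 0) If `q` is a primitive `n`-th root of unity and `n ∤ j + 1`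
for every `j` in the support of `f`, then `uⁿ` and `vⁿ` are central in `B_q(f)`. -/
theorem bqf_central_un_vn_char_zero (k : Type*) [Field k] [CharZero k] (q : k)
    (d : ℕ) (c : ℕ → k) (n : ℕ) (hn : 0 < n) (hq : IsPrimitiveRoot q n)
    (hsupp : ∀ j ≤ d, c j ≠ 0 → ¬ (n ∣ (j + 1))) :
    let u := RingQuot.mkAlgHom k (BqfRel k q d c) (ι k (0 : Fin 3))
    let v := RingQuot.mkAlgHom k (BqfRel k q d c) (ι k (1 : Fin 3))
    u ^ n ∈ Subalgebra.center k (RingQuot (BqfRel k q d c)) ∧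
    v ^ n ∈ Subalgebra.center k (RingQuot (BqfRel k q d c)) := by
  intro u v
  set w := RingQuot.mkAlgHom k (BqfRel k q d c) (ι k (2 : Fin 3)) with hw
  have hqn : q ^ n = 1 := hq.pow_eq_one
  have hq0 : q ≠ 0 := by
    intro h
    rw [h, zero_pow hn.ne'] at hqn
    exact zero_ne_one hqn
  -- the three relations, pushed to the quotient
  have huv : u * v = q • (v * u) := by
    have h := RingQuot.mkAlgHom_rel k (BqfRel.uv (k := k) (q := q) (d := d) (c := c))
    simpa [u, v, map_mul, map_smul] using h
  have hvu : v * u = q⁻¹ • (u * v) := by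
    rw [huv, smul_smul, inv_mul_cancel₀ hq0, one_smul]
  have hwu : w * u = q • (u * w) + ∑ j ∈ Finset.range (d + 1), c j • v ^ j := by
    have h := RingQuot.mkAlgHom_rel k (BqfRel.wu (k := k) (q := q) (d := d) (c := c))
    simpa [u, v, w, map_mul, map_smul, map_add, map_sum, map_pow] using h
  have hwv : w * v = q⁻¹ • (v * w) + ∑ j ∈ Finset.range (d + 1), c j • u ^ j := by
    have h := RingQuot.mkAlgHom_rel k (BqfRel.wv (k := k) (q := q) (d := d) (c := c))
    simpa [u, v, w, map_mul, map_smul, map_add, map_sum, map_pow] using h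
  obtain ⟨m, rfl⟩ : ∃ m, n = m + 1 := ⟨n - 1, (Nat.succ_pred_eq_of_pos hn).symm⟩
  -- vanishing of the geometric sums
  have hgeom : ∀ j ∈ Finset.range (d + 1),
      c j * ∑ i ∈ Finset.range (m+1), (q ^ (j+1)) ^ i = 0 := by
    intro j hj
    rcases eq_or_ne (c j) 0 with h | h
    · rw [h, zero_mul]
    · have hnd := hsupp j (Nat.lt_succ_iff.mp (Finset.mem_range.mp hj)) h
      have hx1 : q ^ (j+1) ≠ 1 := fun he => hnd ((hq.pow_eq_one_iff_dvd (j+1)).mp he)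
      have hxn : (q ^ (j+1)) ^ (m+1) = 1 := by
        rw [← pow_mul, mul_comm, pow_mul, hqn, one_pow]
      rw [bqf_geom_zero hx1 hxn, mul_zero]
  have hgeom' : ∀ j ∈ Finset.range (d + 1),
      c j * ∑ i ∈ Finset.range (m+1), ((q⁻¹) ^ (j+1)) ^ i = 0 := by
    intro j hj
    rcases eq_or_ne (c j) 0 with h | h
    · rw [h, zero_mul]
    · have hnd := hsupp j (Nat.lt_succ_iff.mp (Finset.mem_range.mp hj)) h
      have hx1 : (q⁻¹) ^ (j+1) ≠ 1 := by
        simp only [ne_eq, inv_pow, inv_eq_one]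
        exact fun he => hnd ((hq.pow_eq_one_iff_dvd (j+1)).mp he)
      have hxn : ((q⁻¹) ^ (j+1)) ^ (m+1) = 1 := by
        rw [inv_pow, inv_pow, ← pow_mul, mul_comm, pow_mul, hqn, one_pow, inv_one]
      rw [bqf_geom_zero hx1 hxn, mul_zero]
  have hqin : (q⁻¹) ^ (m+1) = 1 := by rw [inv_pow, hqn, inv_one]
  -- w commutes with u^n and v^n
  have hwun : w * u ^ (m+1) = u ^ (m+1) * w := by
    have := bqf_w_upow huv hwu m
    rw [this, hqn, one_smul, Finset.sum_congr rfl (fun j hj => by rw [hgeom j hj])]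
    simp
  have huvq : v * u = q⁻¹ • (u * v) := hvu
  have hwvn : w * v ^ (m+1) = v ^ (m+1) * w := by
    have := bqf_w_upow hvu hwv m
    rw [this, hqin, one_smul, Finset.sum_congr rfl (fun j hj => by rw [hgeom' j hj])]
    simp
  -- u and v commute with u^n and v^n
  have hvun : v * u ^ (m+1) = u ^ (m+1) * v := by
    rw [bqf_u_vpow hvu (m+1), hqin, one_smul]
  have huvn : u * v ^ (m+1) = v ^ (m+1) * u := by
    rw [bqf_u_vpow huv (m+1), hqn, one_smul]
  constructor
  · exact bqf_mem_center q d c (u ^ (m+1)) ((Commute.refl u).pow_left (m+1)).eq hvun.symm hwun.symm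
  · exact bqf_mem_center q d c (v ^ (m+1)) huvn.symm ((Commute.refl v).pow_left (m+1)).eq hwvn.symm
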